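/- Let S be a set of positive integers, r ≥ 0 an integer, and n ≥ 1, k ≥ 1 integers. Then k·L_{S,r}(n,k) = Σ_{s∈S} s!·C(n,s)·L_{S,r}(n−s, k−1), where the sum has only finitely many nonzero terms (terms with s > n vanish). -/

import Mathlib

open Finset
open scoped Classical
/-- A partition of `Fin N` into nonempty lists of distinct elements:
every element lies in exactly one list of `P`. -/
def IsListPartition {N : ℕ} (P : Finset (List (Fin N))) : Prop :=
  (∀ l ∈ P, l ≠ [] ∧ l.Nodup) ∧ ∀ x : Fin N, ∃! l, l ∈ P ∧ x ∈ l

/-- The set of partitions of `{1,…,n+r}` (encoded as `Fin (n+r)`) into `k+r` nonempty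
lists whose lengths lie in `S`, such that the first `r` elements lie in distinct lists. -/
def srLahSet (S : Set ℕ) (r n k : ℕ) : Set (Finset (List (Fin (n + r)))) :=
  {P | IsListPartition P ∧ P.card = k + r ∧ (∀ l ∈ P, l.length ∈ S) ∧
    ∀ i j : Fin (n + r), (i : ℕ) < r → (j : ℕ) < r → i ≠ j →
      ∀ l ∈ P, i ∈ l → j ∉ l}

/-- The `(S,r)`-Lah number `L_{S,r}(n,k)`. -/
noncomputable def srLah (S : Set ℕ) (r n k : ℕ) : ℕ := Nat.card (srLahSet S r n k)

/-- The `(S,r)`-Lah number with integer arguments, zero for negative arguments. -/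
noncomputable def srLahZ (S : Set ℕ) (r : ℕ) (n k : ℤ) : ℤ :=
  if 0 ≤ n ∧ 0 ≤ k then srLah S r n.toNat k.toNat else 0

section Aux

/-- nodup lists over a `Fin N` form a finite type -/
lemma finite_nodup (N : ℕ) : Finite {l : List (Fin N) // l.Nodup} := by
  have : Function.Injective
      (fun l : {l : List (Fin N) // l.Nodup} => (fun i : Fin N => l.1[(i:ℕ)]?)) := by
    intro l l' h
    have hlen : l.1.length ≤ N := by
      simpa using l.2.length_le_card
    have hlen' : l'.1.length ≤ N := by
      simpa using l'.2.length_le_card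
    ext1
    apply List.ext_getElem?
    intro m
    by_cases hm : m < N
    · exact congrFun h ⟨m, hm⟩
    · rw [List.getElem?_eq_none (by omega), List.getElem?_eq_none (by omega)]
  exact Finite.of_injective _ this

lemma sm_le {M : ℕ} {f : Fin M → ℕ} (hf : ∀ a b : Fin M, a < b → f a < f b) :
    ∀ (v : ℕ) (hv : v < M), v ≤ f ⟨v, hv⟩ := by
  intro v
  induction v with
  | zero => simp
  | succ w ih =>
    intro hv
    have hw : w < M := by omega
    have := hf ⟨w, hw⟩ ⟨w+1, hv⟩ (by simp [Fin.lt_def])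
    have := ih hw
    omega

variable {N M : ℕ} (A : Finset (Fin N)) (h : A.card = M)

/-- monotone enumeration of `A` -/
noncomputable def bwd : Fin M → Fin N := fun y => ((A.orderIsoOfFin h y : A) : Fin N)

lemma bwd_strictMono : StrictMono (bwd A h) := by
  intro a b hab
  exact (A.orderIsoOfFin h).lt_iff_lt.mpr hab

lemma bwd_injective : Function.Injective (bwd A h) := (bwd_strictMono A h).injective

lemma bwd_mem (y : Fin M) : bwd A h y ∈ A := (A.orderIsoOfFin h y).2

lemma bwd_surj {x : Fin N} (hx : x ∈ A) : ∃ y, bwd A h y = x :=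
  ⟨(A.orderIsoOfFin h).symm ⟨x, hx⟩, by simp [bwd]⟩

variable {r : ℕ}

lemma bwd_val_eq (hrN : r ≤ N) (hsp : ∀ v : Fin N, (v : ℕ) < r → v ∈ A)
    (y : Fin M) (hy : (y : ℕ) < r) : ((bwd A h y : Fin N) : ℕ) = (y : ℕ) := by
  have hge : (y : ℕ) ≤ (bwd A h y : ℕ) := by
    have := sm_le (f := fun z : Fin M => ((bwd A h z : Fin N) : ℕ))
      (fun a b hab => bwd_strictMono A h hab) y.val y.isLt
    simpa using this
  -- the other inequality
  have hchain : ∀ (w : ℕ) (hw : w < r),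
      w ≤ (((A.orderIsoOfFin h).symm ⟨⟨w, lt_of_lt_of_le hw hrN⟩, hsp _ hw⟩ : Fin M) : ℕ) := by
    have hsm : ∀ a b : Fin r, a < b →
        (((A.orderIsoOfFin h).symm ⟨⟨(a:ℕ), lt_of_lt_of_le a.isLt hrN⟩, hsp _ a.isLt⟩ : Fin M) : ℕ) <
        (((A.orderIsoOfFin h).symm ⟨⟨(b:ℕ), lt_of_lt_of_le b.isLt hrN⟩, hsp _ b.isLt⟩ : Fin M) : ℕ) := by
      intro a b hab
      have : (⟨⟨(a:ℕ), lt_of_lt_of_le a.isLt hrN⟩, hsp _ a.isLt⟩ : A) <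
             ⟨⟨(b:ℕ), lt_of_lt_of_le b.isLt hrN⟩, hsp _ b.isLt⟩ := by
        simp [Subtype.mk_lt_mk, Fin.lt_def, Fin.lt_def.mp hab]
      exact (A.orderIsoOfFin h).symm.lt_iff_lt.mpr this
    intro w hw
    have := sm_le (M := r)
      (f := fun a : Fin r => (((A.orderIsoOfFin h).symm
        ⟨⟨(a:ℕ), lt_of_lt_of_le a.isLt hrN⟩, hsp _ a.isLt⟩ : Fin M) : ℕ)) hsm w hw
    simpa using this
  have hyM := hchain (y : ℕ) hy
  -- y ≤ z where z := symm ⟨y.val⟩, so bwd y ≤ bwd z = ⟨y.val⟩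
  set z := (A.orderIsoOfFin h).symm ⟨⟨(y:ℕ), lt_of_lt_of_le hy hrN⟩, hsp _ hy⟩ with hz
  have hyz : y ≤ z := by
    rw [Fin.le_def]; exact hyM
  have : (A.orderIsoOfFin h) y ≤ (A.orderIsoOfFin h) z := (A.orderIsoOfFin h).le_iff_le.mpr hyz
  have h2 : ((A.orderIsoOfFin h y : A) : Fin N) ≤ ⟨(y:ℕ), lt_of_lt_of_le hy hrN⟩ := by
    rw [hz] at this
    simp at this; exact this
  have h3 : ((bwd A h y : Fin N) : ℕ) ≤ (y : ℕ) := by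
    simpa [bwd] using Fin.le_def.mp h2
  omega

lemma bwd_val_lt_iff (hrN : r ≤ N) (hrM : r ≤ M) (hsp : ∀ v : Fin N, (v : ℕ) < r → v ∈ A)
    (y : Fin M) : ((bwd A h y : Fin N) : ℕ) < r ↔ (y : ℕ) < r := by
  constructor
  · intro hlt
    by_contra hge
    set v : Fin M := ⟨((bwd A h y : Fin N) : ℕ), lt_of_lt_of_le hlt hrM⟩ with hv
    have hveq : ((bwd A h v : Fin N) : ℕ) = (v : ℕ) := bwd_val_eq A h hrN hsp v hlt
    have : bwd A h v = bwd A h y := by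
      apply Fin.ext; rw [hveq]
    have := bwd_injective A h this
    rw [← this] at hge
    simp [hv] at hge
    omega
  · intro hy
    rw [bwd_val_eq A h hrN hsp y hy]; exact hy

end Aux

section Pm
variable {N M : ℕ}

/-- pull a list back along an injective map -/
noncomputable def pm (f : Fin M → Fin N) : List (Fin N) → List (Fin M) :=
  List.filterMap (Function.partialInv f)

variable {f : Fin M → Fin N}

lemma mem_pm (hf : Function.Injective f) {l : List (Fin N)} {y : Fin M} :
    y ∈ pm f l ↔ f y ∈ l := by
  simp only [pm, List.mem_filterMap]
  constructor
  · rintro ⟨a, ha, hs⟩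
    rwa [(Function.partialInv_of_injective hf _ a).mp hs]
  · intro hy
    exact ⟨f y, hy, Function.partialInv_left hf y⟩

lemma map_pm (hf : Function.Injective f) {l : List (Fin N)} (hl : ∀ x ∈ l, ∃ y, f y = x) :
    (pm f l).map f = l := by
  induction l with
  | nil => rfl
  | cons a t ih =>
    obtain ⟨y, rfl⟩ := hl a List.mem_cons_self
    have ih' := ih (fun x hx => hl x (List.mem_cons_of_mem _ hx))
    simp only [pm, List.filterMap_cons, Function.partialInv_left hf]
    simp only [pm] at ih'
    simp [List.map_cons, ih']

lemma pm_map (hf : Function.Injective f) (q : List (Fin M)) : pm f (q.map f) = q := by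
  induction q with
  | nil => rfl
  | cons a t ih =>
    simp only [pm, List.map_cons, List.filterMap_cons, Function.partialInv_left hf]
    simp only [pm] at ih
    simp [ih]

lemma length_pm (hf : Function.Injective f) {l : List (Fin N)} (hl : ∀ x ∈ l, ∃ y, f y = x) :
    (pm f l).length = l.length := by
  conv_rhs => rw [← map_pm hf hl]
  simp

lemma nodup_pm (hf : Function.Injective f) {l : List (Fin N)} (hl : l.Nodup) :
    (pm f l).Nodup := by
  refine List.Nodup.filterMap ?_ hl
  intro a a' b h1 h2
  have e1 := (Function.partialInv_of_injective hf b a).mp h1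
  have e2 := (Function.partialInv_of_injective hf b a').mp h2
  rw [← e1, ← e2]

end Pm
section Main
variable (S : Set ℕ) (r n k s : ℕ)

def GoodL (N r s : ℕ) : Set (List (Fin N)) :=
  {L | L.Nodup ∧ L.length = s ∧ ∀ i ∈ L, r ≤ (i : ℕ)}

def PairsSet : Set (Finset (List (Fin (n + r))) × List (Fin (n + r))) :=
  {PL | PL.1 ∈ srLahSet S r n k ∧ PL.2 ∈ PL.1 ∧ PL.2 ∈ GoodL (n + r) r s}

def TSet : Set (Finset (List (Fin (n + r))) × List (Fin (n + r))) :=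
  {PL | PL.1 ∈ srLahSet S r n k ∧ PL.2 ∈ PL.1 ∧ ∀ i ∈ PL.2, r ≤ (i : ℕ)}

variable {n s}

lemma theA_card {L : List (Fin (n + r))} (hL : L ∈ GoodL (n + r) r s) (hsn : s ≤ n) :
    (Finset.univ \ L.toFinset).card = (n - s) + r := by
  rw [Finset.card_sdiff_of_subset (Finset.subset_univ _)]
  rw [List.toFinset_card_of_nodup hL.1, hL.2.1]
  simp only [Finset.card_univ, Fintype.card_fin]
  omega

/-- the monotone bijection from `Fin ((n-s)+r)` onto the complement of `L` -/
noncomputable def bwdL (L : List (Fin (n + r))) : Fin ((n - s) + r) → Fin (n + r) :=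
  if h : (Finset.univ \ L.toFinset).card = (n - s) + r then bwd _ h
  else fun y => Fin.castLE (by omega) y

variable {r}

section bwdLprops
variable {L : List (Fin (n + r))} (hL : L ∈ GoodL (n + r) r s) (hsn : s ≤ n)
include hL hsn

lemma bwdL_eq : bwdL r (s := s) L = bwd _ (theA_card r hL hsn) := by
  rw [bwdL, dif_pos]

lemma bwdL_inj : Function.Injective (bwdL r (s := s) L) := by
  rw [bwdL_eq hL hsn]; exact bwd_injective _ _

lemma bwdL_not_mem (y : Fin ((n - s) + r)) : bwdL r L y ∉ L := by
  rw [bwdL_eq hL hsn]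
  have := bwd_mem _ (theA_card r hL hsn) y
  simp only [Finset.mem_sdiff, Finset.mem_univ, true_and, List.mem_toFinset] at this
  exact this

lemma bwdL_surj {x : Fin (n + r)} (hx : x ∉ L) : ∃ y, bwdL r (s := s) L y = x := by
  rw [bwdL_eq hL hsn]
  exact bwd_surj _ _ (by simp [hx])

lemma bwdL_sp : ∀ v : Fin (n + r), (v : ℕ) < r → v ∈ Finset.univ \ L.toFinset := by
  intro v hv
  simp only [Finset.mem_sdiff, Finset.mem_univ, true_and, List.mem_toFinset]
  intro hmem
  exact absurd (hL.2.2 v hmem) (by omega)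

lemma bwdL_val_lt_iff (y : Fin ((n - s) + r)) :
    ((bwdL r L y : Fin (n + r)) : ℕ) < r ↔ (y : ℕ) < r := by
  rw [bwdL_eq hL hsn]
  exact bwd_val_lt_iff _ _ (by omega) (by omega) (bwdL_sp hL hsn) y

end bwdLprops

/-- unique list containing x, for P a list partition -/
lemma unique_list {N : ℕ} {P : Finset (List (Fin N))} (hP : IsListPartition P)
    {l l' : List (Fin N)} {x : Fin N} (hl : l ∈ P) (hl' : l' ∈ P) (hx : x ∈ l) (hx' : x ∈ l') :
    l = l' := by
  obtain ⟨w, _, hw⟩ := hP.2 x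
  rw [hw l ⟨hl, hx⟩, hw l' ⟨hl', hx'⟩]

section FwdBwd
variable {S k} {P : Finset (List (Fin (n + r)))} {L : List (Fin (n + r))}

lemma erase_not_mem_L (hP : P ∈ srLahSet S r n k) (hLP : L ∈ P)
    {l : List (Fin (n + r))} (hl : l ∈ P.erase L) : ∀ x ∈ l, x ∉ L := by
  intro x hx hxL
  exact (Finset.ne_of_mem_erase hl) (unique_list hP.1 (Finset.mem_of_mem_erase hl) hLP hx hxL)

lemma fwd_mem (hk : 1 ≤ k) (hs : s ∈ S) (hsn : s ≤ n)
    (hP : P ∈ srLahSet S r n k) (hLP : L ∈ P) (hL : L ∈ GoodL (n + r) r s) :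
    (P.erase L).image (pm (bwdL r (s := s) L)) ∈ srLahSet S r (n - s) (k - 1) := by
  have hinj := bwdL_inj hL hsn
  have hrange : ∀ l ∈ P.erase L, ∀ x ∈ l, ∃ y, bwdL r (s := s) L y = x := fun l hl x hx =>
    bwdL_surj hL hsn (erase_not_mem_L hP hLP hl x hx)
  have hnodup : ∀ l ∈ P, l.Nodup := fun l hl => (hP.1.1 l hl).2
  refine ⟨⟨?_, ?_⟩, ?_, ?_, ?_⟩
  · rintro l' hl'
    obtain ⟨l, hl, rfl⟩ := Finset.mem_image.mp hl'
    constructor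
    · intro hnil
      have := length_pm hinj (hrange l hl)
      rw [hnil] at this
      have h0 := (hP.1.1 l (Finset.mem_of_mem_erase hl)).1
      simp at this
      exact h0 (List.length_eq_zero_iff.mp this.symm)
    · exact nodup_pm hinj (hnodup l (Finset.mem_of_mem_erase hl))
  · intro y
    have hynotL : bwdL r (s := s) L y ∉ L := bwdL_not_mem hL hsn y
    obtain ⟨l, ⟨hlP, hyl⟩, huniq⟩ := hP.1.2 (bwdL r (s := s) L y)
    have hlL : l ≠ L := fun h => hynotL (h ▸ hyl)
    have hlE : l ∈ P.erase L := Finset.mem_erase.mpr ⟨hlL, hlP⟩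
    refine ⟨pm (bwdL r (s := s) L) l, ⟨Finset.mem_image_of_mem _ hlE, (mem_pm hinj).mpr hyl⟩, ?_⟩
    rintro l' ⟨hl', hyl'⟩
    obtain ⟨l₂, hl₂, rfl⟩ := Finset.mem_image.mp hl'
    have : bwdL r (s := s) L y ∈ l₂ := (mem_pm hinj).mp hyl'
    rw [huniq l₂ ⟨Finset.mem_of_mem_erase hl₂, this⟩]
  · rw [Finset.card_image_of_injOn, Finset.card_erase_of_mem hLP, hP.2.1]
    · omega
    · intro l₁ h₁ l₂ h₂ heq
      have := congrArg (List.map (bwdL r (s := s) L)) heq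
      rwa [map_pm hinj (hrange l₁ h₁), map_pm hinj (hrange l₂ h₂)] at this
  · rintro l' hl'
    obtain ⟨l, hl, rfl⟩ := Finset.mem_image.mp hl'
    rw [length_pm hinj (hrange l hl)]
    exact hP.2.2.1 l (Finset.mem_of_mem_erase hl)
  · rintro i j hi hj hij l' hl' hil' hjl'
    obtain ⟨l, hl, rfl⟩ := Finset.mem_image.mp hl'
    have hbi : bwdL r (s := s) L i ∈ l := (mem_pm hinj).mp hil'
    have hbj : bwdL r (s := s) L j ∈ l := (mem_pm hinj).mp hjl'
    have hineq : bwdL r (s := s) L i ≠ bwdL r (s := s) L j := fun h => hij (hinj h)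
    exact hP.2.2.2 _ _ ((bwdL_val_lt_iff hL hsn i).mpr hi) ((bwdL_val_lt_iff hL hsn j).mpr hj)
      hineq l (Finset.mem_of_mem_erase hl) hbi hbj

lemma bwd_mem_srLahSet (hk : 1 ≤ k) (hs : s ∈ S) (h1s : 1 ≤ s) (hsn : s ≤ n)
    {P' : Finset (List (Fin ((n - s) + r)))} (hP' : P' ∈ srLahSet S r (n - s) (k - 1))
    (hL : L ∈ GoodL (n + r) r s) :
    insert L (P'.image (List.map (bwdL r (s := s) L))) ∈ srLahSet S r n k ∧
      L ∉ P'.image (List.map (bwdL r (s := s) L)) := by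
  have hinj := bwdL_inj hL hsn
  have hLne : L ≠ [] := by
    intro h; rw [h] at hL; have := hL.2.1; simp at this; omega
  have himg : ∀ l ∈ P'.image (List.map (bwdL r (s := s) L)), ∀ x ∈ l, x ∉ L := by
    rintro l hl x hx
    obtain ⟨q, hq, rfl⟩ := Finset.mem_image.mp hl
    obtain ⟨y, hy, rfl⟩ := List.mem_map.mp hx
    exact bwdL_not_mem hL hsn y
  have hLnotmem : L ∉ P'.image (List.map (bwdL r (s := s) L)) := by
    intro h
    obtain ⟨x, hx⟩ := List.exists_mem_of_ne_nil L hLne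
    exact himg L h x hx hx
  have hmapinj : Function.Injective (List.map (bwdL r (s := s) L)) :=
    List.map_injective_iff.mpr hinj
  refine ⟨⟨⟨?_, ?_⟩, ?_, ?_, ?_⟩, hLnotmem⟩
  · rintro l hl
    rcases Finset.mem_insert.mp hl with rfl | hl
    · exact ⟨hLne, hL.1⟩
    · obtain ⟨q, hq, rfl⟩ := Finset.mem_image.mp hl
      refine ⟨by simpa using (hP'.1.1 q hq).1, List.Nodup.map hinj (hP'.1.1 q hq).2⟩
  · intro x
    by_cases hxL : x ∈ L
    · refine ⟨L, ⟨Finset.mem_insert_self _ _, hxL⟩, ?_⟩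
      rintro l' ⟨hl', hxl'⟩
      rcases Finset.mem_insert.mp hl' with rfl | hl'
      · rfl
      · exact absurd hxL (himg l' hl' x hxl')
    · obtain ⟨y, rfl⟩ := bwdL_surj hL hsn hxL
      obtain ⟨q, ⟨hqP, hyq⟩, huniq⟩ := hP'.1.2 y
      refine ⟨q.map (bwdL r (s := s) L),
        ⟨Finset.mem_insert_of_mem (Finset.mem_image_of_mem _ hqP), List.mem_map_of_mem hyq⟩, ?_⟩
      rintro l' ⟨hl', hxl'⟩
      rcases Finset.mem_insert.mp hl' with rfl | hl'
      · exact absurd hxl' hxL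
      · obtain ⟨q₂, hq₂, rfl⟩ := Finset.mem_image.mp hl'
        obtain ⟨y₂, hy₂, hyy⟩ := List.mem_map.mp hxl'
        have : y₂ = y := hinj hyy
        subst this
        rw [huniq q₂ ⟨hq₂, hy₂⟩]
  · rw [Finset.card_insert_of_notMem hLnotmem,
      Finset.card_image_of_injective _ hmapinj, hP'.2.1]
    omega
  · rintro l hl
    rcases Finset.mem_insert.mp hl with rfl | hl
    · rw [hL.2.1]; exact hs
    · obtain ⟨q, hq, rfl⟩ := Finset.mem_image.mp hl
      simpa using hP'.2.2.1 q hq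
  · rintro i j hi hj hij l hl hil hjl
    rcases Finset.mem_insert.mp hl with rfl | hl
    · exact absurd (hL.2.2 i hil) (by omega)
    · obtain ⟨q, hq, rfl⟩ := Finset.mem_image.mp hl
      obtain ⟨yi, hyi, hyieq⟩ := List.mem_map.mp hil
      obtain ⟨yj, hyj, hyjeq⟩ := List.mem_map.mp hjl
      have hiv : (yi : ℕ) < r := by
        rw [← bwdL_val_lt_iff hL hsn yi, hyieq]; exact hi
      have hjv : (yj : ℕ) < r := by
        rw [← bwdL_val_lt_iff hL hsn yj, hyjeq]; exact hj
      have hne : yi ≠ yj := by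
        intro h; rw [h, hyjeq] at hyieq; exact hij hyieq.symm
      exact hP'.2.2.2 yi yj hiv hjv hne q hq hyi hyj

end FwdBwd
end Main
section Equivs
variable {S : Set ℕ} {r n k s : ℕ}

/-- lists avoiding the special elements -/
abbrev gp {N : ℕ} (r : ℕ) (l : List (Fin N)) : Prop := ∀ i ∈ l, r ≤ (i : ℕ)

noncomputable def pairsEquiv (hk : 1 ≤ k) (hs : s ∈ S) (h1s : 1 ≤ s) (hsn : s ≤ n) :
    PairsSet S r n k s ≃ (GoodL (n + r) r s) × (srLahSet S r (n - s) (k - 1)) where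
  toFun PL := (⟨PL.1.2, PL.2.2.2⟩,
    ⟨(PL.1.1.erase PL.1.2).image (pm (bwdL r (s := s) PL.1.2)),
      fwd_mem hk hs hsn PL.2.1 PL.2.2.1 PL.2.2.2⟩)
  invFun LP := ⟨(insert LP.1.1 (LP.2.1.image (List.map (bwdL r (s := s) LP.1.1))), LP.1.1),
    (bwd_mem_srLahSet hk hs h1s hsn LP.2.2 LP.1.2).1, Finset.mem_insert_self _ _, LP.1.2⟩
  left_inv := by
    rintro ⟨⟨P, L⟩, hP, hLP, hL⟩
    have hinj := bwdL_inj hL hsn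
    have hrange : ∀ l ∈ P.erase L, ∀ x ∈ l, ∃ y, bwdL r (s := s) L y = x := fun l hl x hx =>
      bwdL_surj hL hsn (erase_not_mem_L hP hLP hl x hx)
    apply Subtype.ext
    simp only [Prod.mk.injEq]
    refine ⟨?_, trivial⟩
    rw [Finset.image_image]
    rw [show ((P.erase L).image (List.map (bwdL r (s := s) L) ∘ pm (bwdL r (s := s) L)))
        = P.erase L from ?_]
    · exact Finset.insert_erase hLP
    · conv_rhs => rw [← Finset.image_id (s := P.erase L)]
      apply Finset.image_congr
      intro l hl
      simp only [Function.comp_apply, id_eq]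
      exact map_pm hinj (hrange l (Finset.mem_coe.mp hl))
  right_inv := by
    rintro ⟨⟨L, hL⟩, ⟨P', hP'⟩⟩
    have hinj := bwdL_inj hL hsn
    have hnotmem := (bwd_mem_srLahSet hk hs h1s hsn hP' hL).2
    simp only [Prod.mk.injEq]
    constructor
    · trivial
    · apply Subtype.ext
      simp only
      rw [Finset.erase_insert hnotmem, Finset.image_image]
      conv_rhs => rw [← Finset.image_id (s := P')]
      apply Finset.image_congr
      intro q hq
      simp only [Function.comp_apply, id_eq]
      exact pm_map hinj q

lemma finite_srLahSet (S : Set ℕ) (r n k : ℕ) : Finite (srLahSet S r n k) := by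
  haveI := finite_nodup (n + r)
  haveI : Fintype {l : List (Fin (n + r)) // l.Nodup} := Fintype.ofFinite _
  have hinj : Function.Injective (fun P : srLahSet S r n k =>
      (P.1.subtype (fun l => l.Nodup) : Finset {l : List (Fin (n + r)) // l.Nodup})) := by
    intro P Q h
    dsimp only at h
    apply Subtype.ext
    have recover : ∀ R : srLahSet S r n k,
        (R.1.subtype (fun l => l.Nodup)).map (Function.Embedding.subtype _) = R.1 := by
      intro R
      rw [Finset.subtype_map]
      apply Finset.filter_true_of_mem
      intro l hl; exact (R.2.1.1 l hl).2
    rw [← recover P, ← recover Q, h]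
  exact Finite.of_injective _ hinj

lemma finite_TSet (S : Set ℕ) (r n k : ℕ) : Finite (TSet S r n k) := by
  haveI := finite_nodup (n + r)
  haveI := finite_srLahSet S r n k
  have hinj : Function.Injective (fun PL : TSet S r n k =>
      ((⟨PL.1.1, PL.2.1⟩ : srLahSet S r n k),
       (⟨PL.1.2, (PL.2.1.1.1 PL.1.2 PL.2.2.1).2⟩ : {l : List (Fin (n + r)) // l.Nodup}))) := by
    intro P Q h
    simp only [Prod.mk.injEq, Subtype.mk.injEq] at h
    exact Subtype.ext (Prod.ext h.1 h.2)
  exact Finite.of_injective _ hinj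

lemma finite_PairsSet (S : Set ℕ) (r n k s : ℕ) : Finite (PairsSet S r n k s) := by
  haveI := finite_TSet S r n k
  have hinj : Function.Injective (fun PL : PairsSet S r n k s =>
      (⟨PL.1, PL.2.1, PL.2.2.1, PL.2.2.2.2.2⟩ : TSet S r n k)) := by
    intro P Q h
    exact Subtype.ext (by simpa using congrArg Subtype.val h)
  exact Finite.of_injective _ hinj

lemma specials_card :
    (Finset.univ.filter (fun x : Fin (n + r) => (x : ℕ) < r)).card = r := by
  have : (Finset.univ.filter (fun x : Fin (n + r) => (x : ℕ) < r))
      = (Finset.univ : Finset (Fin r)).image (fun j : Fin r => (⟨(j : ℕ), lt_of_lt_of_le j.isLt (by omega)⟩ : Fin (n + r))) := by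
    ext x
    simp only [Finset.mem_filter, Finset.mem_univ, true_and, Finset.mem_image]
    constructor
    · intro hx; exact ⟨⟨(x : ℕ), hx⟩, by simp⟩
    · rintro ⟨j, _, rfl⟩; exact j.isLt
  rw [this, Finset.card_image_of_injective, Finset.card_univ, Fintype.card_fin]
  intro a b hab
  simpa [Fin.ext_iff] using hab

lemma nonspecials_card :
    (Finset.univ.filter (fun x : Fin (n + r) => r ≤ (x : ℕ))).card = n := by
  have h := Finset.card_filter_add_card_filter_not
    (s := (Finset.univ : Finset (Fin (n + r)))) (p := fun x : Fin (n + r) => (x : ℕ) < r)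
  rw [specials_card] at h
  simp only [Finset.card_univ, Fintype.card_fin] at h
  have : (Finset.univ.filter (fun x : Fin (n + r) => ¬ (x : ℕ) < r))
      = (Finset.univ.filter (fun x : Fin (n + r) => r ≤ (x : ℕ))) := by
    apply Finset.filter_congr; intro x _; simp [not_lt]
  rw [← this]
  omega

lemma filter_bad_card {P : Finset (List (Fin (n + r)))} (hP : P ∈ srLahSet S r n k) :
    (P.filter fun l => ¬ gp r l).card = r := by
  have hcmem : ∀ x : Fin (n + r), (hP.1.2 x).choose ∈ P ∧ x ∈ (hP.1.2 x).choose :=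
    fun x => (hP.1.2 x).choose_spec.1
  have hcuniq : ∀ (x : Fin (n + r)) l, l ∈ P → x ∈ l → l = (hP.1.2 x).choose :=
    fun x l hl hx => (hP.1.2 x).choose_spec.2 l ⟨hl, hx⟩
  have himg : (P.filter fun l => ¬ gp r l) =
      (Finset.univ.filter (fun x : Fin (n + r) => (x : ℕ) < r)).image
        (fun x => (hP.1.2 x).choose) := by
    ext l
    simp only [Finset.mem_filter, Finset.mem_image, Finset.mem_univ, true_and]
    constructor
    · rintro ⟨hlP, hbad⟩
      simp only [gp] at hbad
      push_neg at hbad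
      obtain ⟨i, hi, hir⟩ := hbad
      exact ⟨i, by omega, (hcuniq i l hlP hi).symm⟩
    · rintro ⟨x, hx, rfl⟩
      refine ⟨(hcmem x).1, ?_⟩
      simp only [gp]
      push_neg
      exact ⟨x, (hcmem x).2, by omega⟩
  rw [himg, Finset.card_image_of_injOn, specials_card]
  intro x hx y hy hxy
  dsimp only at hxy
  by_contra hne
  simp only [Finset.coe_filter, Set.mem_setOf_eq, Finset.mem_univ, true_and] at hx hy
  exact hP.2.2.2 x y hx hy hne _ ((hcmem x).1) ((hcmem x).2) (by rw [hxy]; exact (hcmem y).2)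

lemma filter_good_card {P : Finset (List (Fin (n + r)))} (hP : P ∈ srLahSet S r n k) :
    (P.filter (gp r)).card = k := by
  have h := Finset.card_filter_add_card_filter_not
    (s := P) (p := gp r)
  rw [filter_bad_card hP, hP.2.1] at h
  omega

noncomputable def tsetEquiv (S : Set ℕ) (r n k : ℕ) :
    TSet S r n k ≃ Σ P : srLahSet S r n k,
      {l // l ∈ P.1.filter (gp r)} where
  toFun PL := ⟨⟨PL.1.1, PL.2.1⟩, ⟨PL.1.2, Finset.mem_filter.mpr ⟨PL.2.2.1, PL.2.2.2⟩⟩⟩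
  invFun x := ⟨(x.1.1, x.2.1), x.1.2, (Finset.mem_filter.mp x.2.2).1,
    (Finset.mem_filter.mp x.2.2).2⟩
  left_inv := by rintro ⟨⟨P, L⟩, h⟩; rfl
  right_inv := by rintro ⟨⟨P, hP⟩, ⟨l, hl⟩⟩; rfl

lemma card_TSet (S : Set ℕ) (r n k : ℕ) :
    Nat.card (TSet S r n k) = srLah S r n k * k := by
  haveI := finite_srLahSet S r n k
  haveI : Fintype (srLahSet S r n k) := Fintype.ofFinite _
  rw [Nat.card_congr (tsetEquiv S r n k), Nat.card_eq_fintype_card, Fintype.card_sigma]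
  have hterm : ∀ P : srLahSet S r n k,
      Fintype.card {l // l ∈ (P : Finset (List (Fin (n + r)))).filter (gp r)} = k := by
    intro P
    rw [Fintype.card_coe]
    exact filter_good_card P.2
  rw [Finset.sum_congr rfl (fun P _ => hterm P), Finset.sum_const, smul_eq_mul,
    Finset.card_univ, srLah, Nat.card_eq_fintype_card]

end Equivs
section CardGood
variable {S : Set ℕ} {r n k s : ℕ}

noncomputable def goodLEquiv :
    GoodL (n + r) r s ≃ (Fin s ↪ {x : Fin (n + r) // r ≤ (x : ℕ)}) where
  toFun L := ⟨fun i => ⟨L.1.get (Fin.cast L.2.2.1.symm i), L.2.2.2 _ (L.1.get_mem _)⟩, by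
    intro a b hab
    simp only [Subtype.mk.injEq] at hab
    have := (List.nodup_iff_injective_get.mp L.2.1) hab
    simpa [Fin.ext_iff] using this⟩
  invFun f := ⟨List.ofFn (fun i => (f i : Fin (n + r))), by
    rw [List.nodup_ofFn]
    exact Subtype.coe_injective.comp f.injective, by simp, by
    intro x hx
    obtain ⟨i, hi⟩ := List.mem_ofFn.mp hx
    rw [← hi]
    exact (f i).2⟩
  left_inv := by
    rintro ⟨L, hnd, hlen, hr⟩
    apply Subtype.ext
    simp only
    apply List.ext_get (by simp [hlen])
    intro m h1 h2
    simp [List.get_ofFn]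
    rfl
  right_inv := by
    intro f
    apply Function.Embedding.ext
    intro i
    apply Subtype.ext
    simp [List.get_ofFn]

def nonspEquiv : {x : Fin (n + r) // r ≤ (x : ℕ)} ≃ Fin n where
  toFun x := ⟨((x : Fin (n + r)) : ℕ) - r, by
    have h1 := x.2
    have h2 := (x : Fin (n + r)).isLt
    omega⟩
  invFun j := ⟨⟨r + (j : ℕ), by have := j.isLt; omega⟩, by simp⟩
  left_inv := by
    rintro ⟨x, hx⟩
    apply Subtype.ext
    apply Fin.ext
    simp only [Fin.val_mk]
    omega
  right_inv := by
    intro j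
    apply Fin.ext
    simp only [Fin.val_mk]
    omega

lemma card_goodL : Nat.card (GoodL (n + r) r s) = s.factorial * n.choose s := by
  rw [Nat.card_congr goodLEquiv,
    Nat.card_congr (Equiv.embeddingCongr (Equiv.refl (Fin s)) nonspEquiv),
    Nat.card_eq_fintype_card, Fintype.card_embedding_eq, Fintype.card_fin, Fintype.card_fin,
    Nat.descFactorial_eq_factorial_mul_choose]

lemma card_pairs (hk : 1 ≤ k) (hs : s ∈ S) (h1s : 1 ≤ s) (hsn : s ≤ n) :
    Nat.card (PairsSet S r n k s) = s.factorial * n.choose s * srLah S r (n - s) (k - 1) := by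
  rw [Nat.card_congr (pairsEquiv hk hs h1s hsn), Nat.card_prod, card_goodL, srLah]

lemma length_le_n {P : Finset (List (Fin (n + r)))} {L : List (Fin (n + r))}
    (hP : P ∈ srLahSet S r n k) (hLP : L ∈ P) (hr : ∀ i ∈ L, r ≤ (i : ℕ)) :
    L.length ≤ n := by
  have hnd := (hP.1.1 L hLP).2
  rw [← List.toFinset_card_of_nodup hnd]
  have hsub : L.toFinset ⊆ Finset.univ.filter (fun x : Fin (n + r) => r ≤ (x : ℕ)) := by
    intro x hx
    simp only [Finset.mem_filter, Finset.mem_univ, true_and]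
    exact hr x (List.mem_toFinset.mp hx)
  have := Finset.card_le_card hsub
  rwa [nonspecials_card] at this

noncomputable def tsetSigmaEquiv (S : Set ℕ) (r n k : ℕ) : TSet S r n k ≃
    Σ sv : ((Finset.Icc 1 n).filter (· ∈ S) : Finset ℕ), PairsSet S r n k (sv : ℕ) where
  toFun PL := ⟨⟨PL.1.2.length, by
      rw [Finset.mem_filter, Finset.mem_Icc]
      have h1 : PL.1.2 ≠ [] := (PL.2.1.1.1 _ PL.2.2.1).1
      exact ⟨⟨by have := List.length_pos_iff.mpr h1; omega,
        length_le_n PL.2.1 PL.2.2.1 PL.2.2.2⟩, PL.2.1.2.2.1 _ PL.2.2.1⟩⟩,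
    ⟨PL.1, PL.2.1, PL.2.2.1, (PL.2.1.1.1 _ PL.2.2.1).2, rfl, PL.2.2.2⟩⟩
  invFun x := ⟨x.2.1, x.2.2.1, x.2.2.2.1, x.2.2.2.2.2.2⟩
  left_inv := by rintro ⟨⟨P, L⟩, h⟩; rfl
  right_inv := by
    rintro ⟨⟨sv, hsv⟩, ⟨⟨P, L⟩, hPL⟩⟩
    obtain rfl : sv = L.length := hPL.2.2.2.1.symm
    rfl

lemma card_TSet_sum (S : Set ℕ) (r n k : ℕ) :
    Nat.card (TSet S r n k) = ∑ sv ∈ ((Finset.Icc 1 n).filter (· ∈ S)),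
      Nat.card (PairsSet S r n k sv) := by
  haveI : ∀ sv : ℕ, Finite (PairsSet S r n k sv) := fun sv => finite_PairsSet S r n k sv
  haveI : ∀ sv : ℕ, Fintype (PairsSet S r n k sv) := fun sv => Fintype.ofFinite _
  calc Nat.card (TSet S r n k)
      = Fintype.card (Σ sv : ((Finset.Icc 1 n).filter (· ∈ S) : Finset ℕ),
          PairsSet S r n k (sv : ℕ)) := by
        rw [Nat.card_congr (tsetSigmaEquiv S r n k), Nat.card_eq_fintype_card]
    _ = ∑ sv : ((Finset.Icc 1 n).filter (· ∈ S) : Finset ℕ),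
          Fintype.card (PairsSet S r n k (sv : ℕ)) := Fintype.card_sigma
    _ = ∑ sv : ((Finset.Icc 1 n).filter (· ∈ S) : Finset ℕ),
          Nat.card (PairsSet S r n k (sv : ℕ)) := by
        simp [Nat.card_eq_fintype_card]
    _ = ∑ sv ∈ ((Finset.Icc 1 n).filter (· ∈ S)), Nat.card (PairsSet S r n k sv) :=
        Finset.sum_coe_sort ((Finset.Icc 1 n).filter (· ∈ S))
          (fun sv => Nat.card (PairsSet S r n k sv))

end CardGood

/-- `k·L_{S,r}(n,k) = Σ_{s∈S} s!·C(n,s)·L_{S,r}(n−s,k−1)`. -/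
theorem srLah_identity_colour_list (S : Set ℕ) (hS : ∀ s ∈ S, 0 < s) (r n k : ℕ)
    (hn : 1 ≤ n) (hk : 1 ≤ k) :
    (k : ℤ) * srLah S r n k =
      ∑ᶠ s ∈ S, (s.factorial : ℤ) * (n.choose s : ℤ) *
        srLahZ S r ((n : ℤ) - s) ((k : ℤ) - 1) := by
  classical
  have key : srLah S r n k * k = ∑ sv ∈ ((Finset.Icc 1 n).filter (· ∈ S)),
      sv.factorial * n.choose sv * srLah S r (n - sv) (k - 1) := by
    rw [← card_TSet, card_TSet_sum]
    apply Finset.sum_congr rfl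
    intro sv hsv
    rw [Finset.mem_filter, Finset.mem_Icc] at hsv
    exact card_pairs hk hsv.2 hsv.1.1 hsv.1.2
  have hfin : (∑ᶠ sv ∈ S, (sv.factorial : ℤ) * (n.choose sv : ℤ) *
        srLahZ S r ((n : ℤ) - sv) ((k : ℤ) - 1))
      = ∑ sv ∈ ((Finset.Icc 1 n).filter (· ∈ S)),
        (sv.factorial : ℤ) * (n.choose sv : ℤ) * srLahZ S r ((n : ℤ) - sv) ((k : ℤ) - 1) := by
    apply finsum_mem_eq_sum_of_inter_support_eq
    ext sv
    simp only [Set.mem_inter_iff, Function.mem_support, Finset.coe_filter, Finset.mem_Icc,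
      Set.mem_setOf_eq]
    constructor
    · rintro ⟨hsv, hne⟩
      refine ⟨⟨⟨hS sv hsv, ?_⟩, hsv⟩, hne⟩
      by_contra hgt
      apply hne
      rw [Nat.choose_eq_zero_of_lt (by omega)]
      simp
    · rintro ⟨⟨_, hsv⟩, hne⟩
      exact ⟨hsv, hne⟩
  rw [hfin]
  have hterm : ∀ sv ∈ ((Finset.Icc 1 n).filter (· ∈ S)),
      (sv.factorial : ℤ) * (n.choose sv : ℤ) * srLahZ S r ((n : ℤ) - sv) ((k : ℤ) - 1)
      = ((sv.factorial * n.choose sv * srLah S r (n - sv) (k - 1) : ℕ) : ℤ) := by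
    intro sv hsv
    rw [Finset.mem_filter, Finset.mem_Icc] at hsv
    have h1 : (((n : ℤ) - sv)).toNat = n - sv := by omega
    have h2 : (((k : ℤ) - 1)).toNat = k - 1 := by omega
    rw [srLahZ, if_pos ⟨by omega, by omega⟩, h1, h2]
    push_cast
    ring
  rw [Finset.sum_congr rfl hterm, ← Nat.cast_sum, ← key]
  push_cast
  ring
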